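/- Nonnegativity and zero characterization of the restricted gap function: let T be maximal monotone with zer T ≠ ∅. For R > 0 large enough that zer T ∩ B_R ≠ ∅ and int B_R ∩ dom T ≠ ∅, the function G_R(p) = sup_{z ∈ B_R} sup_{w ∈ T(z)} ⟨w, p − z⟩ is convex, lsc, proper, and nonnegative; moreover, for any p with ‖p‖ < R, G_R(p) = 0 if and only if 0 ∈ T(p). -/

import Mathlib

open Filter Topology


open scoped RealInnerProductSpace

/-- A set-valued operator `T : E ⇉ E` is monotone. -/
def MonotoneOp {E : Type*} [NormedAddCommGroup E] [InnerProductSpace ℝ E]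
    (T : E → Set E) : Prop :=
  ∀ ⦃x y x' y' : E⦄, x' ∈ T x → y' ∈ T y → 0 ≤ ⟪x - y, x' - y'⟫

/-- A set-valued operator `T : E ⇉ E` is maximal monotone: it is monotone, and
any point monotonically related to the whole graph belongs to the graph. -/
def MaximalMonotoneOp {E : Type*} [NormedAddCommGroup E] [InnerProductSpace ℝ E]
    (T : E → Set E) : Prop :=
  MonotoneOp T ∧ ∀ z w : E, (∀ x x' : E, x' ∈ T x → 0 ≤ ⟪z - x, w - x'⟫) → w ∈ T z

/-- The restricted gap function `G_R(p) = sup_{z ∈ B_R} sup_{w ∈ T z} ⟨w, p − z⟩`,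
valued in the extended reals. -/
noncomputable def restrictedGap {E : Type*} [NormedAddCommGroup E]
    [InnerProductSpace ℝ E] (T : E → Set E) (R : ℝ) (p : E) : EReal :=
  ⨆ z ∈ Metric.closedBall (0:E) R, ⨆ w ∈ T z, ((⟪w, p - z⟫ : ℝ) : EReal)


section Aux
variable {E : Type*} [NormedAddCommGroup E] [InnerProductSpace ℝ E]

private lemma sum_sum_norm_sub_sq {ι : Type*} (Q : Finset ι) (w : ι → ℝ)
    (hw : ∑ q ∈ Q, w q = 1) (c : ι → E) :
    ∑ q ∈ Q, ∑ r ∈ Q, w q * w r * ‖c q - c r‖^2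
      = 2 * (∑ q ∈ Q, w q * ‖c q‖^2) - 2 * ‖∑ q ∈ Q, w q • c q‖^2 := by
  have h2 : ‖∑ q ∈ Q, w q • c q‖^2 = ∑ q ∈ Q, ∑ r ∈ Q, w q * w r * ⟪c q, c r⟫ := by
    rw [← real_inner_self_eq_norm_sq, sum_inner]
    refine Finset.sum_congr rfl fun q hq => ?_
    rw [real_inner_smul_left, inner_sum, Finset.mul_sum]
    refine Finset.sum_congr rfl fun r hr => ?_
    rw [real_inner_smul_right]; ring
  have hA : ∑ q ∈ Q, ∑ r ∈ Q, w q * w r * ‖c q‖^2 = ∑ q ∈ Q, w q * ‖c q‖^2 := by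
    refine Finset.sum_congr rfl fun q hq => ?_
    calc ∑ r ∈ Q, w q * w r * ‖c q‖^2 = ∑ r ∈ Q, (w q * ‖c q‖^2) * w r :=
          Finset.sum_congr rfl fun r _ => by ring
      _ = (w q * ‖c q‖^2) * ∑ r ∈ Q, w r := by rw [← Finset.mul_sum]
      _ = w q * ‖c q‖^2 := by rw [hw, mul_one]
  have hB : ∑ q ∈ Q, ∑ r ∈ Q, w q * w r * ‖c r‖^2 = ∑ r ∈ Q, w r * ‖c r‖^2 := by
    rw [Finset.sum_comm]
    refine Finset.sum_congr rfl fun r hr => ?_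
    calc ∑ q ∈ Q, w q * w r * ‖c r‖^2 = ∑ q ∈ Q, (w r * ‖c r‖^2) * w q :=
          Finset.sum_congr rfl fun q _ => by ring
      _ = (w r * ‖c r‖^2) * ∑ q ∈ Q, w q := by rw [← Finset.mul_sum]
      _ = w r * ‖c r‖^2 := by rw [hw, mul_one]
  calc ∑ q ∈ Q, ∑ r ∈ Q, w q * w r * ‖c q - c r‖^2
      = ∑ q ∈ Q, ∑ r ∈ Q,
          (w q*w r*‖c q‖^2 + w q*w r*‖c r‖^2 - 2*(w q*w r*⟪c q, c r⟫)) := by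
        refine Finset.sum_congr rfl fun q _ => Finset.sum_congr rfl fun r _ => ?_
        rw [norm_sub_sq_real]; ring
    _ = (∑ q ∈ Q, ∑ r ∈ Q, w q*w r*‖c q‖^2) + (∑ q ∈ Q, ∑ r ∈ Q, w q*w r*‖c r‖^2)
          - 2*(∑ q ∈ Q, ∑ r ∈ Q, w q*w r*⟪c q,c r⟫) := by
        simp only [Finset.sum_add_distrib, Finset.sum_sub_distrib, Finset.mul_sum]
    _ = 2 * (∑ q ∈ Q, w q * ‖c q‖^2) - 2 * ‖∑ q ∈ Q, w q • c q‖^2 := by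
        rw [hA, hB, h2]; ring

private lemma continuous_finset_sup' {ι : Type*} (A : Finset ι) :
    ∀ (hA : A.Nonempty) (F : ι → E → ℝ), (∀ i ∈ A, Continuous (F i)) →
    Continuous fun v => A.sup' hA (fun i => F i v) := by
  induction A using Finset.cons_induction with
  | empty => intro h; simp at h
  | cons i A hiA ih =>
    intro hA F hF
    rcases A.eq_empty_or_nonempty with rfl | hAne
    · simpa using hF i (by simp)
    · simp only [Finset.sup'_cons hAne]
      exact (hF i (by simp)).max (ih hAne F fun j hj => hF j (Finset.mem_cons_of_mem hj))

end Aux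
section Kir
set_option maxHeartbeats 1000000
variable {E : Type*} [NormedAddCommGroup E] [InnerProductSpace ℝ E] [FiniteDimensional ℝ E]

private lemma kirszbraun_finite {ι : Type*} (A : Finset ι) (hA : A.Nonempty)
    (s f : ι → E) (y : E) (hlip : ∀ i ∈ A, ∀ j ∈ A, ‖f i - f j‖ ≤ ‖s i - s j‖) :
    ∃ v : E, ∀ i ∈ A, ‖v - f i‖ ≤ ‖y - s i‖ := by
  classical
  obtain ⟨i₀, hi₀⟩ := hA
  set g : E → ℝ := fun v => A.sup' ⟨i₀, hi₀⟩ (fun i => ‖v - f i‖^2 - ‖y - s i‖^2) with hg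
  have hgc : Continuous g :=
    continuous_finset_sup' A ⟨i₀, hi₀⟩ _ (fun i _ => by fun_prop)
  set r2 : ℝ := A.sup' ⟨i₀, hi₀⟩ (fun i => ‖y - s i‖^2) with hr2
  have hr2nn : 0 ≤ r2 := by
    rw [hr2]; exact le_trans (sq_nonneg ‖y - s i₀‖) (Finset.le_sup' (fun i => ‖y - s i‖^2) hi₀)
  set Fm : ℝ := A.sup' ⟨i₀, hi₀⟩ (fun i => ‖f i₀ - f i‖^2) with hFm
  have hFmnn : 0 ≤ Fm := by
    rw [hFm]; exact le_trans (sq_nonneg ‖f i₀ - f i₀‖) (Finset.le_sup' (fun i => ‖f i₀ - f i‖^2) hi₀)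
  set ρ : ℝ := Real.sqrt (Fm + r2) + 1 with hρ
  have hρpos : 0 < ρ := by positivity
  have hρsq : Fm + r2 + 1 ≤ ρ^2 := by
    have h1 : Real.sqrt (Fm + r2) ^ 2 = Fm + r2 := Real.sq_sqrt (by positivity)
    have h2 : 0 ≤ Real.sqrt (Fm + r2) := Real.sqrt_nonneg _
    nlinarith
  have hK : IsCompact (Metric.closedBall (f i₀) ρ) := isCompact_closedBall _ _
  obtain ⟨v, hvK, hvmin⟩ := hK.exists_isMinOn (Metric.nonempty_closedBall.2 hρpos.le)
    hgc.continuousOn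
  have hgfi₀ : g (f i₀) ≤ Fm := by
    rw [hg, hFm]
    apply Finset.sup'_le
    intro i hi
    have h1 : ‖f i₀ - f i‖^2 ≤ A.sup' ⟨i₀, hi₀⟩ (fun i => ‖f i₀ - f i‖^2) :=
      Finset.le_sup' (fun i => ‖f i₀ - f i‖^2) hi
    nlinarith [sq_nonneg (‖y - s i‖)]
  have hglob : ∀ u : E, g v ≤ g u := by
    intro u
    by_cases hu : u ∈ Metric.closedBall (f i₀) ρ
    · exact hvmin hu
    · have h1 : ρ < ‖u - f i₀‖ := by
        rw [Metric.mem_closedBall, not_le, dist_eq_norm] at hu; exact hu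
      have h2 : ‖u - f i₀‖^2 - ‖y - s i₀‖^2 ≤ g u := by
        rw [hg]; exact Finset.le_sup' (fun i => ‖u - f i‖^2 - ‖y - s i‖^2) hi₀
      have h3 : ‖y - s i₀‖^2 ≤ r2 := by
        rw [hr2]; exact Finset.le_sup' (fun i => ‖y - s i‖^2) hi₀
      have h4 : g v ≤ g (f i₀) := hvmin (Metric.mem_closedBall_self hρpos.le)
      nlinarith
  by_cases hle : g v ≤ 0
  · refine ⟨v, fun i hi => ?_⟩
    have h1 : ‖v - f i‖^2 - ‖y - s i‖^2 ≤ g v := by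
      rw [hg]; exact Finset.le_sup' (fun i => ‖v - f i‖^2 - ‖y - s i‖^2) hi
    nlinarith [norm_nonneg (v - f i), norm_nonneg (y - s i)]
  push_neg at hle
  exfalso
  set Act : Finset ι := A.filter (fun i => ‖v - f i‖^2 - ‖y - s i‖^2 = g v) with hAct
  have hActA : Act ⊆ A := Finset.filter_subset _ _
  have hActne : Act.Nonempty := by
    obtain ⟨i, hi, hieq⟩ := Finset.exists_mem_eq_sup' (⟨i₀, hi₀⟩ : A.Nonempty)
      (fun i => ‖v - f i‖^2 - ‖y - s i‖^2)
    refine ⟨i, Finset.mem_filter.2 ⟨hi, ?_⟩⟩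
    rw [hg]; exact hieq.symm
  set Q : Finset E := Act.image f with hQ
  have hQne : Q.Nonempty := hActne.image f
  have hvhull : v ∈ convexHull ℝ (↑Q : Set E) := by
    by_contra hout
    obtain ⟨φ, u, hφv, hφb⟩ := geometric_hahn_banach_point_closed
      (convex_convexHull ℝ _) (Q.finite_toSet.isClosed_convexHull (𝕜 := ℝ)) hout
    set d : E := (InnerProductSpace.toDual ℝ E).symm φ with hd
    have hdd : ∀ x : E, ⟪d, x⟫ = φ x := fun x => InnerProductSpace.toDual_symm_apply
    set δ : ℝ := u - φ v with hδ
    have hδpos : 0 < δ := sub_pos.2 hφv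
    have hact : ∀ i ∈ Act, δ ≤ ⟪d, f i - v⟫ := by
      intro i hi
      have hfi : f i ∈ convexHull ℝ (↑Q : Set E) :=
        subset_convexHull ℝ _ (by exact_mod_cast Finset.mem_image_of_mem f hi)
      have h5 := hφb _ hfi
      rw [inner_sub_right]
      simp only [hdd]
      rw [hδ]; linarith
    have hdne : d ≠ 0 := by
      obtain ⟨i, hi⟩ := hActne
      intro h0
      have := hact i hi
      rw [h0, inner_zero_left] at this
      linarith
    have hdpos : (0:ℝ) < ‖d‖^2 := pow_pos (norm_pos_iff.2 hdne) 2
    set τ : ι → ℝ := fun i =>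
      if ‖v - f i‖^2 - ‖y - s i‖^2 = g v then δ/‖d‖^2
      else min 1 ((g v - (‖v - f i‖^2 - ‖y - s i‖^2)) /
        (|2*⟪d, v - f i⟫| + ‖d‖^2 + 1)) with hτ
    have hτpos : ∀ i ∈ A, 0 < τ i := by
      intro i hi
      by_cases hia : ‖v - f i‖^2 - ‖y - s i‖^2 = g v
      · simp only [hτ, if_pos hia]; positivity
      · have hlt : ‖v - f i‖^2 - ‖y - s i‖^2 < g v :=
          lt_of_le_of_ne (by rw [hg]; exact Finset.le_sup' (fun i => ‖v - f i‖^2 - ‖y - s i‖^2) hi) hia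
        simp only [hτ, if_neg hia]
        have hD : (0:ℝ) < |2*⟪d, v - f i⟫| + ‖d‖^2 + 1 := by positivity
        exact lt_min one_pos (div_pos (by linarith) hD)
    set t : ℝ := A.inf' ⟨i₀, hi₀⟩ τ with ht
    have htpos : 0 < t := by rw [ht]; exact (Finset.lt_inf'_iff _).2 hτpos
    have htle : ∀ i ∈ A, t ≤ τ i := by
      intro i hi; rw [ht]; exact Finset.inf'_le _ hi
    have hterm : ∀ i ∈ A, ‖(v + t • d) - f i‖^2 - ‖y - s i‖^2 < g v := by
      intro i hi
      have h0 : (v + t • d) - f i = (v - f i) + t • d := by abel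
      have hexp : ‖(v + t • d) - f i‖^2
          = ‖v - f i‖^2 + 2*t*⟪d, v - f i⟫ + t^2*‖d‖^2 := by
        rw [h0, norm_add_sq_real, real_inner_smul_right, norm_smul,
          real_inner_comm (v - f i) d]
        simp only [Real.norm_eq_abs, mul_pow, sq_abs]
        ring
      by_cases hia : ‖v - f i‖^2 - ‖y - s i‖^2 = g v
      · have h1 : t ≤ δ/‖d‖^2 := by
          have h := htle i hi; simp only [hτ, if_pos hia] at h; exact h
        have h2 : δ ≤ ⟪d, f i - v⟫ := hact i (Finset.mem_filter.2 ⟨hi, hia⟩)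
        have h3 : ⟪d, v - f i⟫ = -⟪d, f i - v⟫ := by
          rw [← inner_neg_right]; congr 1; abel
        have h4 : t * ‖d‖^2 ≤ δ := (le_div_iff₀ hdpos).1 h1
        have h5 : ⟪d, v - f i⟫ ≤ -δ := by rw [h3]; linarith
        have h6 : 2*t*⟪d, v - f i⟫ ≤ 2*t*(-δ) :=
          mul_le_mul_of_nonneg_left h5 (by positivity)
        have h7 : t^2*‖d‖^2 ≤ t*δ := by
          calc t^2*‖d‖^2 = t*(t*‖d‖^2) := by ring
            _ ≤ t*δ := mul_le_mul_of_nonneg_left h4 htpos.le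
        rw [hexp]; linarith [mul_pos htpos hδpos]
      · have hlt : ‖v - f i‖^2 - ‖y - s i‖^2 < g v :=
          lt_of_le_of_ne (by rw [hg]; exact Finset.le_sup' (fun i => ‖v - f i‖^2 - ‖y - s i‖^2) hi) hia
        have hD : (0:ℝ) < |2*⟪d, v - f i⟫| + ‖d‖^2 + 1 := by positivity
        have h := htle i hi; simp only [hτ, if_neg hia] at h
        have ht1 : t ≤ 1 := le_trans h (min_le_left _ _)
        have ht2 : t ≤ (g v - (‖v - f i‖^2 - ‖y - s i‖^2)) /
            (|2*⟪d, v - f i⟫| + ‖d‖^2 + 1) := le_trans h (min_le_right _ _)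
        have hD2 : t * (|2*⟪d, v - f i⟫| + ‖d‖^2 + 1)
            ≤ g v - (‖v - f i‖^2 - ‖y - s i‖^2) := (le_div_iff₀ hD).1 ht2
        have habs : 2*t*⟪d, v - f i⟫ ≤ t * |2*⟪d, v - f i⟫| := by
          have h9 := mul_le_mul_of_nonneg_left (le_abs_self (2*⟪d, v - f i⟫)) htpos.le
          linarith
        have ht2' : t^2*‖d‖^2 ≤ t*‖d‖^2 :=
          mul_le_mul_of_nonneg_right (by nlinarith : t^2 ≤ t) (sq_nonneg ‖d‖)
        rw [hexp]; linarith
    have hless : g (v + t • d) < g v := by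
      conv_lhs => rw [hg]
      exact (Finset.sup'_lt_iff _).2 hterm
    exact absurd (hglob (v + t • d)) (not_le.2 hless)
  -- extract convex weights and derive the contradiction
  rw [Finset.convexHull_eq] at hvhull
  obtain ⟨w, hw0, hw1, hwc⟩ := hvhull
  have hcm : ∑ q ∈ Q, w q • q = v := by
    rw [Finset.centerMass, hw1] at hwc
    simpa using hwc
  have hwitE : ∀ q : {x // x ∈ Q}, ∃ i, i ∈ Act ∧ f i = q.1 := by
    rintro ⟨q, hq⟩
    simpa using Finset.mem_image.1 hq
  choose wit hwitAct hwitf using hwitE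
  set QA := Q.attach with hQA
  set w' : {x // x ∈ Q} → ℝ := fun q => w q.1 with hw'
  set b : {x // x ∈ Q} → E := fun q => v - q.1 with hb
  set a : {x // x ∈ Q} → E := fun q => y - s (wit q) with ha
  have hw1' : ∑ q ∈ QA, w' q = 1 := by
    rw [hQA, hw', Finset.sum_attach]; exact hw1
  have hw0' : ∀ q ∈ QA, 0 ≤ w' q := fun q _ => hw0 q.1 q.2
  have hbq : ∀ q : {x // x ∈ Q}, ‖b q‖^2 = g v + ‖a q‖^2 := by
    intro q
    have h1 := (Finset.mem_filter.1 (hwitAct q)).2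
    have h2 := hwitf q
    rw [hb, ha]
    simp only [← h2]
    linarith
  have hab : ∀ q r : {x // x ∈ Q}, ‖b q - b r‖ ≤ ‖a q - a r‖ := by
    intro q r
    have h1 : b q - b r = f (wit r) - f (wit q) := by
      rw [hb]; simp only [hwitf]; abel
    have h2 : a q - a r = s (wit r) - s (wit q) := by
      show (y - s (wit q)) - (y - s (wit r)) = _; abel
    rw [h1, h2]
    exact hlip _ (hActA (hwitAct r)) _ (hActA (hwitAct q))
  have hSB : ∑ q ∈ QA, ∑ r ∈ QA, w' q * w' r * ‖b q - b r‖^2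
      = 2 * (∑ q ∈ QA, w' q * ‖b q‖^2) - 2 * ‖∑ q ∈ QA, w' q • b q‖^2 :=
    sum_sum_norm_sub_sq QA w' hw1' b
  have hSA : ∑ q ∈ QA, ∑ r ∈ QA, w' q * w' r * ‖a q - a r‖^2
      = 2 * (∑ q ∈ QA, w' q * ‖a q‖^2) - 2 * ‖∑ q ∈ QA, w' q • a q‖^2 :=
    sum_sum_norm_sub_sq QA w' hw1' a
  have hBA : ∑ q ∈ QA, ∑ r ∈ QA, w' q * w' r * ‖b q - b r‖^2
      ≤ ∑ q ∈ QA, ∑ r ∈ QA, w' q * w' r * ‖a q - a r‖^2 := by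
    refine Finset.sum_le_sum fun q hq => Finset.sum_le_sum fun r hr => ?_
    have h1 : ‖b q - b r‖^2 ≤ ‖a q - a r‖^2 := by
      have := hab q r
      nlinarith [norm_nonneg (b q - b r), norm_nonneg (a q - a r)]
    exact mul_le_mul_of_nonneg_left h1 (mul_nonneg (hw0' q hq) (hw0' r hr))
  have hbsum : ∑ q ∈ QA, w' q • b q = 0 := by
    have h1 : ∑ q ∈ QA, w' q • b q
        = (∑ q ∈ QA, w' q) • v - ∑ q ∈ QA, w' q • q.1 := by
      rw [Finset.sum_smul, ← Finset.sum_sub_distrib]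
      exact Finset.sum_congr rfl fun q _ => by rw [hb, smul_sub]
    have h2 : ∑ q ∈ QA, w' q • q.1 = v := by
      rw [hQA, hw']
      rw [Finset.sum_attach Q (fun x => w x • x)]
      exact hcm
    rw [h1, h2, hw1', one_smul, sub_self]
  have hbnorm : ∑ q ∈ QA, w' q * ‖b q‖^2 = g v + ∑ q ∈ QA, w' q * ‖a q‖^2 := by
    have h1 : ∑ q ∈ QA, w' q * ‖b q‖^2
        = ∑ q ∈ QA, (w' q * g v + w' q * ‖a q‖^2) := by
      refine Finset.sum_congr rfl fun q _ => ?_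
      rw [hbq q]; ring
    rw [h1, Finset.sum_add_distrib, ← Finset.sum_mul, hw1', one_mul]
  have hfinal : g v ≤ 0 := by
    have h1 : 0 ≤ ‖∑ q ∈ QA, w' q • a q‖^2 := sq_nonneg _
    rw [hSB, hSA] at hBA
    rw [hbsum] at hBA
    rw [hbnorm] at hBA
    simp only [norm_zero] at hBA
    nlinarith
  linarith

end Kir
section Minty
variable {E : Type*} [NormedAddCommGroup E] [InnerProductSpace ℝ E] [FiniteDimensional ℝ E]

private lemma norm_sub_le_norm_add_of_inner_nonneg {d e : E} (h : 0 ≤ ⟪d, e⟫) :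
    ‖d - e‖ ≤ ‖d + e‖ := by
  have h1 : ‖d - e‖^2 ≤ ‖d + e‖^2 := by
    rw [norm_sub_sq_real, norm_add_sq_real]; linarith
  nlinarith [norm_nonneg (d - e), norm_nonneg (d + e)]

private lemma exists_onePoint (A : E → Set E) (hmono : MonotoneOp A)
    (hne : ∃ x w, w ∈ A x) (y : E) :
    ∃ v : E, ∀ x w, w ∈ A x → ‖v - (x - w)‖ ≤ ‖y - (x + w)‖ := by
  classical
  obtain ⟨x₀, w₀, h₀⟩ := hne
  set G : Set (E × E) := {q : E × E | q.2 ∈ A q.1} with hG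
  set i₀ : G := ⟨(x₀, w₀), h₀⟩ with hi₀
  set C : G → Set E := fun g => Metric.closedBall (g.1.1 - g.1.2) ‖y - (g.1.1 + g.1.2)‖
    with hC
  have hlipG : ∀ (g h : G), ‖(g.1.1 - g.1.2) - (h.1.1 - h.1.2)‖
      ≤ ‖(g.1.1 + g.1.2) - (h.1.1 + h.1.2)‖ := by
    intro g h
    have hm : 0 ≤ ⟪g.1.1 - h.1.1, g.1.2 - h.1.2⟫ := hmono g.2 h.2
    have e1 : (g.1.1 - g.1.2) - (h.1.1 - h.1.2) = (g.1.1 - h.1.1) - (g.1.2 - h.1.2) := by abel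
    have e2 : (g.1.1 + g.1.2) - (h.1.1 + h.1.2) = (g.1.1 - h.1.1) + (g.1.2 - h.1.2) := by abel
    rw [e1, e2]
    exact norm_sub_le_norm_add_of_inner_nonneg hm
  have hmem : ∀ (v : E) (g : G), v ∈ C g ↔ ‖v - (g.1.1 - g.1.2)‖ ≤ ‖y - (g.1.1 + g.1.2)‖ := by
    intro v g; rw [hC]; exact mem_closedBall_iff_norm
  have hint : (C i₀ ∩ ⋂ g, C g).Nonempty := by
    by_contra hemp
    rw [Set.not_nonempty_iff_eq_empty] at hemp
    obtain ⟨t, ht⟩ := (isCompact_closedBall _ _).elim_finite_subfamily_closed C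
      (fun g => Metric.isClosed_closedBall) hemp
    obtain ⟨v, hv⟩ := kirszbraun_finite (insert i₀ t) (Finset.insert_nonempty _ _)
      (fun g => g.1.1 + g.1.2) (fun g => g.1.1 - g.1.2) y
      (fun i _ j _ => hlipG i j)
    have hvint : v ∈ C i₀ ∩ ⋂ g ∈ t, C g := by
      constructor
      · rw [hmem]; exact hv i₀ (Finset.mem_insert_self _ _)
      · exact Set.mem_iInter₂.2 fun g hg => (hmem v g).2 (hv g (Finset.mem_insert_of_mem hg))
    rw [ht] at hvint
    exact hvint
  obtain ⟨v, hv₀, hv⟩ := hint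
  refine ⟨v, fun x w hw => ?_⟩
  have := Set.mem_iInter.1 hv ⟨(x, w), hw⟩
  exact (hmem v ⟨(x, w), hw⟩).1 this

private lemma minty_surj (A : E → Set E) (hT : MaximalMonotoneOp A)
    (hne : ∃ x w, w ∈ A x) (y : E) : ∃ z w, w ∈ A z ∧ z + w = y := by
  obtain ⟨v, hv⟩ := exists_onePoint A hT.1 hne y
  set z : E := (2:ℝ)⁻¹ • (y + v) with hz
  set u : E := (2:ℝ)⁻¹ • (y - v) with hu
  have hzu : z + u = y := by
    rw [hz, hu, ← smul_add]
    have : y + v + (y - v) = (2:ℝ) • y := by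
      rw [two_smul]; abel
    rw [this, smul_smul]
    norm_num
  refine ⟨z, u, ?_, hzu⟩
  apply hT.2
  intro x x' hx'
  have hsq : ‖v - (x - x')‖^2 ≤ ‖y - (x + x')‖^2 := by
    have := hv x x' hx'
    nlinarith [norm_nonneg (v - (x - x')), norm_nonneg (y - (x + x'))]
  have e1 : z - x = (2:ℝ)⁻¹ • ((y - (x + x')) + (v - (x - x'))) := by
    rw [hz]
    match_scalars <;> norm_num
  have e2 : u - x' = (2:ℝ)⁻¹ • ((y - (x + x')) - (v - (x - x'))) := by
    rw [hu]
    match_scalars <;> norm_num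
  rw [e1, e2, real_inner_smul_left, real_inner_smul_right]
  have e3 : ∀ P Q : E, ⟪P + Q, P - Q⟫ = ‖P‖^2 - ‖Q‖^2 := by
    intro P Q
    rw [inner_sub_right, inner_add_left, inner_add_left,
      real_inner_self_eq_norm_sq, real_inner_self_eq_norm_sq, real_inner_comm]
    ring
  rw [e3]
  nlinarith

private lemma minty_lambda (A : E → Set E) (hT : MaximalMonotoneOp A)
    (hne : ∃ x w, w ∈ A x) {lam : ℝ} (hlam : 0 < lam) (y : E) :
    ∃ z w, w ∈ A z ∧ z + lam • w = y := by
  obtain ⟨x₀, w₀, h₀⟩ := hne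
  set B : E → Set E := fun x => (fun w => lam • w) '' A x with hB
  have hBmax : MaximalMonotoneOp B := by
    constructor
    · rintro x y' x' y'' ⟨u, hu, rfl⟩ ⟨u', hu', rfl⟩
      rw [← smul_sub, real_inner_smul_right]
      exact mul_nonneg hlam.le (hT.1 hu hu')
    · intro z w hrel
      have hmem : lam⁻¹ • w ∈ A z := by
        apply hT.2
        intro x x' hx'
        have h := hrel x (lam • x') ⟨x', hx', rfl⟩
        have he : lam⁻¹ • w - x' = lam⁻¹ • (w - lam • x') := by
          rw [smul_sub, smul_smul, inv_mul_cancel₀ hlam.ne', one_smul]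
        rw [he, real_inner_smul_right]
        exact mul_nonneg (inv_nonneg.2 hlam.le) h
      exact ⟨lam⁻¹ • w, hmem, by
        show lam • lam⁻¹ • w = w
        rw [smul_smul, mul_inv_cancel₀ hlam.ne', one_smul]⟩
  obtain ⟨z, w, hwmem, hzw⟩ := minty_surj B hBmax ⟨x₀, lam • w₀, ⟨w₀, h₀, rfl⟩⟩ y
  obtain ⟨u, hu, rfl⟩ := hwmem
  exact ⟨z, u, hu, hzw⟩

private lemma maximal_add_lipschitz (A : E → Set E) (hT : MaximalMonotoneOp A)
    (hne : ∃ x w, w ∈ A x) (P : E → E) (L : ℝ) (hL : 0 ≤ L)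
    (hPmono : ∀ x y, 0 ≤ ⟪x - y, P x - P y⟫) (hPlip : ∀ x y, ‖P x - P y‖ ≤ L * ‖x - y‖) :
    MaximalMonotoneOp (fun x => (fun w => w + P x) '' A x) := by
  constructor
  · rintro x y x' y' ⟨u, hu, rfl⟩ ⟨u', hu', rfl⟩
    have h1 := hT.1 hu hu'
    have h2 := hPmono x y
    have he : u + P x - (u' + P y) = (u - u') + (P x - P y) := by abel
    rw [he, inner_add_right]
    linarith
  · intro q v hrel
    have h1L : (0:ℝ) < 1 + L := by linarith
    set u0 : E := v - P q + L • q with hu0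
    have key : ∀ x x', x' ∈ A x → 0 ≤ ⟪q - x, u0 - (x' + L • x)⟫ := by
      intro x x' hx'
      have h1 : 0 ≤ ⟪q - x, v - (x' + P x)⟫ := hrel x (x' + P x) ⟨x', hx', rfl⟩
      have h2 : |⟪q - x, P x - P q⟫| ≤ L * ‖q - x‖^2 := by
        have ha := abs_real_inner_le_norm (q - x) (P x - P q)
        have h3 := hPlip x q
        have h4 : ‖x - q‖ = ‖q - x‖ := norm_sub_rev _ _
        rw [h4] at h3
        nlinarith [norm_nonneg (q - x)]
      have h5 : ⟪q - x, L • (q - x)⟫ = L * ‖q - x‖^2 := by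
        rw [real_inner_smul_right, real_inner_self_eq_norm_sq]
      have he : u0 - (x' + L • x) = (v - (x' + P x)) + (P x - P q) + L • (q - x) := by
        rw [hu0, smul_sub]; abel
      rw [he, inner_add_right, inner_add_right, h5]
      have h6 := abs_le.1 h2
      linarith [h6.1]
    obtain ⟨z, w, hw, hzw⟩ := minty_lambda A hT hne (inv_pos.2 h1L) ((1+L)⁻¹ • (u0 + q))
    have hzw' : (1+L) • z + w = u0 + q := by
      have h := congrArg (fun t : E => (1+L) • t) hzw
      simpa only [smul_add, smul_smul, mul_inv_cancel₀ h1L.ne', one_smul] using h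
    have hw' : w = u0 + q - (1+L) • z := by rw [← hzw']; abel
    have h4 : u0 - (w + L • z) = z - q := by
      rw [hw', add_smul, one_smul]; abel
    have hk := key z w hw
    rw [h4] at hk
    have h5 : ⟪q - z, z - q⟫ = -‖q - z‖^2 := by
      rw [show z - q = -(q - z) by abel, inner_neg_right, real_inner_self_eq_norm_sq]
    rw [h5] at hk
    have h7 : q = z := by
      have h8 : ‖q - z‖ = 0 := by nlinarith [norm_nonneg (q - z)]
      have := norm_sub_eq_zero_iff.1 h8
      exact this
    have h9 : w = v - P q := by
      rw [hw', ← h7, hu0, add_smul, one_smul]; abel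
    refine ⟨v - P q, ?_, by show (v - P q) + P q = v; module⟩
    rw [← h9, h7]
    exact hw

end Minty
section Pen
variable {E : Type*} [NormedAddCommGroup E] [InnerProductSpace ℝ E]

/-- Penalty operator: `x - proj_{B_R} x`. -/
noncomputable def pen (R : ℝ) (x : E) : E := if ‖x‖ ≤ R then 0 else (1 - R/‖x‖) • x

private lemma pen_eq_zero {R : ℝ} {x : E} (h : ‖x‖ ≤ R) : pen R x = 0 := if_pos h

private lemma pen_eq_smul {R : ℝ} {x : E} (h : ¬ ‖x‖ ≤ R) :
    pen R x = (1 - R/‖x‖) • x := if_neg h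

private lemma pen_coeff_nonneg {R : ℝ} {x : E} (hR : 0 ≤ R) (h : ¬ ‖x‖ ≤ R) :
    0 ≤ 1 - R/‖x‖ := by
  push_neg at h
  have hx : 0 < ‖x‖ := lt_of_le_of_lt hR h
  have : R/‖x‖ ≤ 1 := by rw [div_le_one hx]; linarith
  linarith

private lemma norm_pen {R : ℝ} {x : E} (hR : 0 ≤ R) (h : ¬ ‖x‖ ≤ R) :
    ‖pen R x‖ = ‖x‖ - R := by
  push_neg at h
  have hx : 0 < ‖x‖ := lt_of_le_of_lt hR h
  rw [pen_eq_smul (not_le.2 h), norm_smul, Real.norm_eq_abs,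
    abs_of_nonneg (pen_coeff_nonneg hR (not_le.2 h))]
  field_simp

private lemma norm_le_add_pen {R : ℝ} (hR : 0 ≤ R) (x : E) : ‖x‖ ≤ R + ‖pen R x‖ := by
  by_cases h : ‖x‖ ≤ R
  · rw [pen_eq_zero h]; simp; linarith
  · rw [norm_pen hR h]; ring_nf; rfl

private lemma pen_inner_le {R : ℝ} (hR : 0 ≤ R) (x : E) {u : E} (hu : ‖u‖ ≤ R) :
    ⟪pen R x, u - x⟫ ≤ 0 := by
  by_cases h : ‖x‖ ≤ R
  · rw [pen_eq_zero h, inner_zero_left]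
  · push_neg at h
    have hx : 0 < ‖x‖ := lt_of_le_of_lt hR h
    rw [pen_eq_smul (not_le.2 h), real_inner_smul_left, inner_sub_right,
      real_inner_self_eq_norm_sq]
    have h1 : ⟪x, u⟫ ≤ ‖x‖ * R := by
      calc ⟪x, u⟫ ≤ ‖x‖ * ‖u‖ := real_inner_le_norm x u
        _ ≤ ‖x‖ * R := by nlinarith
    have h2 := pen_coeff_nonneg hR (not_le.2 h)
    nlinarith [sq_nonneg ‖x‖, mul_pos hx (sub_pos.2 h)]

private lemma pen_inner_ge {R : ℝ} (hR : 0 ≤ R) (x : E) {x₀ : E} (hx₀ : ‖x₀‖ ≤ R) :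
    (R - ‖x₀‖) * ‖pen R x‖ ≤ ⟪x - x₀, pen R x⟫ := by
  by_cases h : ‖x‖ ≤ R
  · rw [pen_eq_zero h]; simp
  · push_neg at h
    have hx : 0 < ‖x‖ := lt_of_le_of_lt hR h
    rw [pen_eq_smul (not_le.2 h), real_inner_smul_right, inner_sub_left,
      real_inner_self_eq_norm_sq, norm_smul, Real.norm_eq_abs,
      abs_of_nonneg (pen_coeff_nonneg hR (not_le.2 h))]
    have h1 : ⟪x₀, x⟫ ≤ ‖x₀‖ * ‖x‖ := real_inner_le_norm x₀ x
    have h2 := pen_coeff_nonneg hR (not_le.2 h)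
    have h3 : ‖x₀‖ ≤ R := hx₀
    nlinarith [mul_nonneg h2 hx.le, mul_nonneg (mul_nonneg h2 hx.le) (sub_nonneg.2 h.le)]

/-- projection onto the ball -/
private lemma proj_facts {R : ℝ} (hR : 0 ≤ R) (x : E) :
    ‖x - pen R x‖ ≤ R ∧ ∀ z : E, ‖z‖ ≤ R → ⟪pen R x, z - (x - pen R x)⟫ ≤ 0 := by
  by_cases h : ‖x‖ ≤ R
  · rw [pen_eq_zero h]
    refine ⟨by simpa using h, fun z hz => by rw [inner_zero_left]⟩
  · push_neg at h
    have hx : 0 < ‖x‖ := lt_of_le_of_lt hR h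
    have hproj : x - pen R x = (R/‖x‖) • x := by
      rw [pen_eq_smul (not_le.2 h)]
      match_scalars; ring
    constructor
    · rw [hproj, norm_smul, Real.norm_eq_abs, abs_of_nonneg (by positivity)]
      field_simp
      exact le_rfl
    · intro z hz
      rw [hproj, pen_eq_smul (not_le.2 h), real_inner_smul_left, inner_sub_right,
        real_inner_smul_right, real_inner_self_eq_norm_sq]
      have h1 : ⟪x, z⟫ ≤ ‖x‖ * R := by
        calc ⟪x, z⟫ ≤ ‖x‖ * ‖z‖ := real_inner_le_norm x z
          _ ≤ ‖x‖ * R := by nlinarith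
      have h2 := pen_coeff_nonneg hR (not_le.2 h)
      have h4 : R/‖x‖ * ‖x‖^2 = R * ‖x‖ := by field_simp
      nlinarith [mul_pos hx (sub_pos.2 h)]

private lemma pen_firm {R : ℝ} (hR : 0 ≤ R) (x y : E) :
    ‖(x - pen R x) - (y - pen R y)‖^2 ≤ ⟪x - y, (x - pen R x) - (y - pen R y)⟫ := by
  obtain ⟨hπx, hvx⟩ := proj_facts hR x
  obtain ⟨hπy, hvy⟩ := proj_facts hR y
  have h1 : ⟪pen R x, (y - pen R y) - (x - pen R x)⟫ ≤ 0 := hvx _ hπy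
  have h2 : ⟪pen R y, (x - pen R x) - (y - pen R y)⟫ ≤ 0 := hvy _ hπx
  set πx := x - pen R x
  set πy := y - pen R y
  have h3 : ⟪pen R x - pen R y, πy - πx⟫ ≤ 0 := by
    rw [inner_sub_left]
    have := h2
    rw [show πx - πy = -(πy - πx) by abel, inner_neg_right] at this
    linarith
  have h4 : x - y = (pen R x - pen R y) + (πx - πy) := by
    simp only [πx, πy]; abel
  rw [h4, inner_add_left, real_inner_self_eq_norm_sq]
  rw [show πy - πx = -(πx - πy) by abel, inner_neg_right] at h3
  linarith [h3]

private lemma pen_mono {R : ℝ} (hR : 0 ≤ R) (x y : E) :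
    0 ≤ ⟪x - y, pen R x - pen R y⟫ := by
  have hf := pen_firm hR x y
  set πd := (x - pen R x) - (y - pen R y) with hπd
  have hcs : ⟪x - y, πd⟫ ≤ ‖x - y‖ * ‖πd‖ := real_inner_le_norm _ _
  have hne : ‖πd‖ ≤ ‖x - y‖ := by
    by_cases h0 : ‖πd‖ = 0
    · rw [h0]; exact norm_nonneg _
    · have hpos : 0 < ‖πd‖ := lt_of_le_of_ne (norm_nonneg _) (Ne.symm h0)
      nlinarith
  have he : pen R x - pen R y = (x - y) - πd := by rw [hπd]; abel
  rw [he, inner_sub_right, real_inner_self_eq_norm_sq]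
  nlinarith [real_inner_le_norm (x - y) πd, mul_le_mul_of_nonneg_left hne (norm_nonneg (x - y))]

private lemma pen_lip {R : ℝ} (hR : 0 ≤ R) (x y : E) :
    ‖pen R x - pen R y‖ ≤ 1 * ‖x - y‖ := by
  have hf := pen_firm hR x y
  set πd := (x - pen R x) - (y - pen R y) with hπd
  have he : pen R x - pen R y = (x - y) - πd := by rw [hπd]; abel
  have h1 : ‖(x - y) - πd‖^2 = ‖x - y‖^2 - 2*⟪x - y, πd⟫ + ‖πd‖^2 := norm_sub_sq_real _ _
  rw [he, one_mul]
  nlinarith [norm_nonneg ((x - y) - πd), norm_nonneg (x - y)]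

end Pen

section Closure
variable {E : Type*} [NormedAddCommGroup E] [InnerProductSpace ℝ E]

private lemma mem_of_tendsto_graph {A : E → Set E} (hT : MaximalMonotoneOp A)
    {z w : ℕ → E} {zb wb : E} (hz : Filter.Tendsto z Filter.atTop (nhds zb))
    (hw : Filter.Tendsto w Filter.atTop (nhds wb)) (hmem : ∀ n, w n ∈ A (z n)) :
    wb ∈ A zb := by
  apply hT.2
  intro x x' hx'
  have hcont : Filter.Tendsto (fun n => ⟪z n - x, w n - x'⟫) Filter.atTop
      (nhds ⟪zb - x, wb - x'⟫) :=
    Filter.Tendsto.inner (hz.sub tendsto_const_nhds) (hw.sub tendsto_const_nhds)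
  exact ge_of_tendsto' hcont (fun n => hT.1 (hmem n) hx')

end Closure
set_option maxHeartbeats 1000000 in
theorem stmt13 {E : Type*} [NormedAddCommGroup E] [InnerProductSpace ℝ E]
    [FiniteDimensional ℝ E]
    (T : E → Set E) (hT : MaximalMonotoneOp T) (R : ℝ) (hR : 0 < R)
    (hzer : ∃ z ∈ Metric.closedBall (0:E) R, (0:E) ∈ T z)
    (hdom : ∃ x : E, (T x).Nonempty ∧ ‖x‖ < R) :
    (∀ p : E, 0 ≤ restrictedGap T R p) ∧
    LowerSemicontinuous (restrictedGap T R) ∧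
    (∀ p q : E, ∀ a b : ℝ, 0 ≤ a → 0 ≤ b → a + b = 1 →
      restrictedGap T R (a • p + b • q) ≤
        (a : EReal) * restrictedGap T R p + (b : EReal) * restrictedGap T R q) ∧
    (∀ p : E, restrictedGap T R p ≠ ⊥) ∧ (∃ p : E, restrictedGap T R p ≠ ⊤) ∧
    (∀ p : E, ‖p‖ < R → (restrictedGap T R p = 0 ↔ (0:E) ∈ T p)) := by
  obtain ⟨z₀, hz₀ball, hz₀⟩ := hzer
  obtain ⟨x₀, ⟨w₀, hw₀⟩, hx₀R⟩ := hdom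
  have hz₀R : ‖z₀‖ ≤ R := mem_closedBall_zero_iff.1 hz₀ball
  have gap_le : ∀ (p : E) (c : ℝ), (∀ z, ‖z‖ ≤ R → ∀ w ∈ T z, ⟪w, p - z⟫ ≤ c) →
      restrictedGap T R p ≤ (c : EReal) := by
    intro p c h
    simp only [restrictedGap]
    exact iSup₂_le fun z hz => iSup₂_le fun w hw =>
      EReal.coe_le_coe_iff.2 (h z (mem_closedBall_zero_iff.1 hz) w hw)
  have le_gap : ∀ (p z w : E), ‖z‖ ≤ R → w ∈ T z →
      ((⟪w, p - z⟫ : ℝ) : EReal) ≤ restrictedGap T R p := by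
    intro p z w hz hw
    simp only [restrictedGap]
    exact le_iSup₂_of_le z (mem_closedBall_zero_iff.2 hz) (le_iSup₂_of_le w hw le_rfl)
  have h0 : ∀ p, 0 ≤ restrictedGap T R p := by
    intro p
    have h1 := le_gap p z₀ 0 hz₀R hz₀
    simpa using h1
  refine ⟨h0, ?_, ?_, ?_, ?_, ?_⟩
  · -- lower semicontinuity
    unfold restrictedGap
    apply lowerSemicontinuous_iSup; intro z
    apply lowerSemicontinuous_iSup; intro hz
    apply lowerSemicontinuous_iSup; intro w
    apply lowerSemicontinuous_iSup; intro hw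
    exact (continuous_coe_real_ereal.comp
      (Continuous.inner continuous_const (continuous_id.sub continuous_const))).lowerSemicontinuous
  · -- convexity
    intro p q a b ha hb hab
    conv_lhs => rw [restrictedGap]
    refine iSup₂_le fun z hz => iSup₂_le fun w hw => ?_
    have hzR : ‖z‖ ≤ R := mem_closedBall_zero_iff.1 hz
    have hsplit : ⟪w, a • p + b • q - z⟫ = a * ⟪w, p - z⟫ + b * ⟪w, q - z⟫ := by
      have hzz : a • p + b • q - z = a • (p - z) + b • (q - z) := by
        calc a • p + b • q - z = a • p + b • q - (a+b) • z := by rw [hab, one_smul]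
          _ = a • (p - z) + b • (q - z) := by rw [add_smul, smul_sub, smul_sub]; abel
      rw [hzz, inner_add_right, real_inner_smul_right, real_inner_smul_right]
    rw [hsplit]
    have hcoe : ((a * ⟪w, p - z⟫ + b * ⟪w, q - z⟫ : ℝ) : EReal)
        = (a : EReal) * ((⟪w, p - z⟫ : ℝ) : EReal) + (b : EReal) * ((⟪w, q - z⟫ : ℝ) : EReal) := by
      rw [← EReal.coe_mul, ← EReal.coe_mul, ← EReal.coe_add]
    rw [hcoe]
    have hae : (0:EReal) ≤ (a : EReal) := by exact_mod_cast ha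
    have hbe : (0:EReal) ≤ (b : EReal) := by exact_mod_cast hb
    exact add_le_add (mul_le_mul_of_nonneg_left (le_gap p z w hzR hw) hae)
      (mul_le_mul_of_nonneg_left (le_gap q z w hzR hw) hbe)
  · -- not ⊥
    intro p hbot
    have := h0 p
    rw [hbot] at this
    exact absurd this (by simp)
  · -- somewhere not ⊤
    refine ⟨x₀, ?_⟩
    have hb : restrictedGap T R x₀ ≤ ((‖w₀‖ * (‖x₀‖ + R) : ℝ) : EReal) := by
      apply gap_le
      intro z hz w hw
      have hm := hT.1 hw₀ hw
      have h1 : ⟪w, x₀ - z⟫ ≤ ⟪w₀, x₀ - z⟫ := by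
        have he : ⟪x₀ - z, w₀ - w⟫ = ⟪w₀, x₀ - z⟫ - ⟪w, x₀ - z⟫ := by
          rw [inner_sub_right, real_inner_comm (x₀ - z) w₀, real_inner_comm (x₀ - z) w]
        linarith
      have h2 : ⟪w₀, x₀ - z⟫ ≤ ‖w₀‖ * ‖x₀ - z‖ := real_inner_le_norm _ _
      have h3 : ‖x₀ - z‖ ≤ ‖x₀‖ + R := le_trans (norm_sub_le _ _) (by linarith)
      nlinarith [norm_nonneg w₀]
    exact (lt_of_le_of_lt hb (EReal.coe_lt_top _)).ne
  · -- characterization of zeros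
    intro p hpR
    constructor
    · -- hard direction
      intro hGzero
      have hA : ∀ z, ‖z‖ ≤ R → ∀ w ∈ T z, ⟪w, p - z⟫ ≤ 0 := by
        intro z hz w hw
        have h1 := le_gap p z w hz hw
        rw [hGzero, ← EReal.coe_zero, EReal.coe_le_coe_iff] at h1
        exact h1
      have hpen : ∀ n : ℕ, ∃ z w, w ∈ T z ∧ z + (w + ((n:ℝ)+1) • pen R z) = p := by
        intro n
        have hmax := maximal_add_lipschitz T hT ⟨x₀, w₀, hw₀⟩
          (fun x => ((n:ℝ)+1) • pen R x) ((n:ℝ)+1) (by positivity)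
          (fun x y => by
            rw [← smul_sub, real_inner_smul_right]
            exact mul_nonneg (by positivity) (pen_mono hR.le x y))
          (fun x y => by
            rw [← smul_sub, norm_smul, Real.norm_eq_abs, abs_of_nonneg (by positivity)]
            have := pen_lip hR.le x y
            nlinarith [norm_nonneg (pen R x - pen R y), norm_nonneg (x - y)])
        obtain ⟨z, w2, hw2, hzw⟩ := minty_surj _ hmax
          ⟨x₀, w₀ + ((n:ℝ)+1) • pen R x₀, ⟨w₀, hw₀, rfl⟩⟩ p
        obtain ⟨w, hwmem, rfl⟩ := hw2
        exact ⟨z, w, hwmem, hzw⟩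
      choose z w hw hzw using hpen
      set q : ℕ → E := fun n => ((n:ℝ)+1) • pen R (z n) with hqdef
      have hq0 : pen R z₀ = 0 := pen_eq_zero hz₀R
      have hzb : ∀ n, ‖z n - z₀‖ ≤ ‖p - z₀‖ := by
        intro n
        have h1 : 0 ≤ ⟪z n - z₀, w n - 0⟫ := hT.1 (hw n) hz₀
        rw [sub_zero] at h1
        have h2 : 0 ≤ ⟪z n - z₀, q n⟫ := by
          have hm := pen_mono hR.le (z n) z₀
          rw [hq0, sub_zero] at hm
          rw [hqdef, real_inner_smul_right]
          exact mul_nonneg (by positivity) hm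
        have h4 : 0 ≤ ⟪z n - z₀, p - z n⟫ := by
          have he : p - z n = w n + q n := by rw [← hzw n]; abel
          rw [he, inner_add_right]; linarith
        have h5 : ‖z n - z₀‖^2 ≤ ⟪z n - z₀, p - z₀⟫ := by
          have he : p - z₀ = (p - z n) + (z n - z₀) := by abel
          rw [he, inner_add_right, real_inner_self_eq_norm_sq]; linarith
        have h6 := real_inner_le_norm (z n - z₀) (p - z₀)
        nlinarith [norm_nonneg (z n - z₀), norm_nonneg (p - z₀)]
      set M : ℝ := ‖p - z₀‖ + ‖z₀‖ with hM
      have hM0 : 0 ≤ M := by rw [hM]; positivity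
      have hzM : ∀ n, ‖z n‖ ≤ M := by
        intro n
        have h1 := norm_add_le (z n - z₀) z₀
        rw [sub_add_cancel] at h1
        rw [hM]; linarith [hzb n]
      have hδ : 0 < R - ‖x₀‖ := sub_pos.2 hx₀R
      set C₁ : ℝ := (M + ‖x₀‖) * (‖p‖ + M + ‖w₀‖) with hC₁
      have hqC : ∀ n, ‖q n‖ ≤ C₁ / (R - ‖x₀‖) := by
        intro n
        have h1 : 0 ≤ ⟪z n - x₀, w n - w₀⟫ := hT.1 (hw n) hw₀
        have h2 : p - z n - q n = w n := by rw [← hzw n]; abel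
        have h3 : ⟪z n - x₀, q n⟫ = ⟪z n - x₀, p - z n - w₀⟫ - ⟪z n - x₀, w n - w₀⟫ := by
          rw [← inner_sub_right, show p - z n - w₀ - (w n - w₀) = q n by rw [← h2]; abel]
        have h4 : ⟪z n - x₀, p - z n - w₀⟫ ≤ ‖z n - x₀‖ * ‖p - z n - w₀‖ :=
          real_inner_le_norm _ _
        have h5 : ‖z n - x₀‖ ≤ M + ‖x₀‖ :=
          le_trans (norm_sub_le _ _) (by linarith [hzM n])
        have h6 : ‖p - z n - w₀‖ ≤ ‖p‖ + M + ‖w₀‖ := by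
          calc ‖p - z n - w₀‖ ≤ ‖p - z n‖ + ‖w₀‖ := norm_sub_le _ _
            _ ≤ ‖p‖ + ‖z n‖ + ‖w₀‖ := by linarith [norm_sub_le p (z n)]
            _ ≤ _ := by linarith [hzM n]
        have h7 : (R - ‖x₀‖) * ‖q n‖ ≤ ⟪z n - x₀, q n⟫ := by
          have hpi := pen_inner_ge hR.le (z n) (le_of_lt hx₀R)
          have hn1 : (0:ℝ) ≤ (n:ℝ)+1 := by positivity
          rw [hqdef, real_inner_smul_right, norm_smul, Real.norm_eq_abs, abs_of_nonneg hn1]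
          nlinarith
        have h8 : ⟪z n - x₀, q n⟫ ≤ C₁ := by
          calc ⟪z n - x₀, q n⟫ ≤ ⟪z n - x₀, p - z n - w₀⟫ := by linarith
            _ ≤ ‖z n - x₀‖ * ‖p - z n - w₀‖ := h4
            _ ≤ (M + ‖x₀‖) * (‖p‖ + M + ‖w₀‖) := by
                apply mul_le_mul h5 h6 (norm_nonneg _)
                positivity
            _ = C₁ := by rw [hC₁]
        rw [le_div_iff₀ hδ]
        nlinarith
      set C₂ : ℝ := C₁ / (R - ‖x₀‖) with hC₂
      have hC₂0 : 0 ≤ C₂ := le_trans (norm_nonneg (q 0)) (hqC 0)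
      have hwB : ∀ n, ‖w n‖ ≤ ‖p‖ + M + C₂ := by
        intro n
        have h2 : w n = p - z n - q n := by rw [← hzw n]; abel
        calc ‖w n‖ = ‖p - z n - q n‖ := by rw [h2]
          _ ≤ ‖p - z n‖ + ‖q n‖ := norm_sub_le _ _
          _ ≤ ‖p‖ + ‖z n‖ + ‖q n‖ := by linarith [norm_sub_le p (z n)]
          _ ≤ _ := by linarith [hzM n, hqC n]
      have hznR : ∀ n, ‖z n‖ ≤ R + C₂/((n:ℝ)+1) := by
        intro n
        have h1 := norm_le_add_pen hR.le (z n)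
        have h2 : ‖pen R (z n)‖ = ‖q n‖/((n:ℝ)+1) := by
          rw [hqdef, norm_smul, Real.norm_eq_abs, abs_of_nonneg (by positivity)]
          field_simp
        have h3 : ‖q n‖/((n:ℝ)+1) ≤ C₂/((n:ℝ)+1) := by
          gcongr
          exact hqC n
        rw [h2] at h1
        linarith
      -- extract a convergent subsequence
      have hbound : ∀ n, (z n, w n) ∈
          Metric.closedBall ((0:E), (0:E)) (max M (‖p‖ + M + C₂)) := by
        intro n
        rw [Metric.mem_closedBall, Prod.dist_eq]
        apply max_le_max <;> rw [dist_zero_right]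
        · exact hzM n
        · exact hwB n
      obtain ⟨l, hlmem, φ, hφ, hconv⟩ :=
        tendsto_subseq_of_bounded Metric.isBounded_closedBall hbound
      have hzconv : Filter.Tendsto (fun k => z (φ k)) Filter.atTop (nhds l.1) :=
        (continuous_fst.tendsto l).comp hconv
      have hwconv : Filter.Tendsto (fun k => w (φ k)) Filter.atTop (nhds l.2) :=
        (continuous_snd.tendsto l).comp hconv
      have hwmem : l.2 ∈ T l.1 := mem_of_tendsto_graph hT hzconv hwconv (fun k => hw (φ k))
      have hzbR : ‖l.1‖ ≤ R := by
        have hnorm : Filter.Tendsto (fun k => ‖z (φ k)‖) Filter.atTop (nhds ‖l.1‖) :=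
          hzconv.norm
        have h1 : Filter.Tendsto (fun k => ((φ k : ℕ):ℝ)+1) Filter.atTop Filter.atTop := by
          apply Filter.tendsto_atTop_add_const_right
          exact tendsto_natCast_atTop_atTop.comp hφ.tendsto_atTop
        have h2 : Filter.Tendsto (fun k => C₂/(((φ k : ℕ):ℝ)+1)) Filter.atTop (nhds 0) :=
          Filter.Tendsto.div_atTop tendsto_const_nhds h1
        have hub : Filter.Tendsto (fun k => R + C₂/(((φ k : ℕ):ℝ)+1)) Filter.atTop (nhds R) := by
          simpa using tendsto_const_nhds.add h2
        exact le_of_tendsto_of_tendsto' hnorm hub (fun k => hznR (φ k))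
      set qb : E := p - l.1 - l.2 with hqbdef
      have hqconv : Filter.Tendsto (fun k => q (φ k)) Filter.atTop (nhds qb) := by
        have he : (fun k => q (φ k)) = fun k => p - z (φ k) - w (φ k) := by
          funext k
          rw [← hzw (φ k)]; abel
        rw [he, hqbdef]
        exact (tendsto_const_nhds.sub hzconv).sub hwconv
      have hkey2 : ∀ u : E, ‖u‖ ≤ R → ⟪qb, u - l.1⟫ ≤ 0 := by
        intro u hu
        have hterm : ∀ k, ⟪q (φ k), u - z (φ k)⟫ ≤ 0 := by
          intro k
          have h1 := pen_inner_le hR.le (z (φ k)) hu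
          have h2 : (0:ℝ) ≤ ((φ k : ℕ):ℝ)+1 := by positivity
          rw [hqdef, real_inner_smul_left]
          nlinarith
        have hcont : Filter.Tendsto (fun k => ⟪q (φ k), u - z (φ k)⟫) Filter.atTop
            (nhds ⟪qb, u - l.1⟫) :=
          Filter.Tendsto.inner hqconv (tendsto_const_nhds.sub hzconv)
        exact le_of_tendsto' hcont hterm
      have hkey1 : ⟪l.2, p - l.1⟫ ≤ 0 := hA l.1 hzbR l.2 hwmem
      have hzbp : l.1 = p := by
        have h1 : ⟪qb, p - l.1⟫ ≤ 0 := hkey2 p hpR.le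
        have hsum : l.2 + qb = p - l.1 := by rw [hqbdef]; abel
        have h2 : ‖p - l.1‖^2 = ⟪l.2, p - l.1⟫ + ⟪qb, p - l.1⟫ := by
          rw [← inner_add_left, hsum, real_inner_self_eq_norm_sq]
        have h3 : ‖p - l.1‖ = 0 := by nlinarith [norm_nonneg (p - l.1)]
        have h4 := norm_sub_eq_zero_iff.1 h3
        exact h4.symm
      have hqb0 : qb = 0 := by
        by_contra hne0
        have hqpos : 0 < ‖qb‖ := norm_pos_iff.2 hne0
        set ε : ℝ := (R - ‖p‖)/‖qb‖ with hε
        have hεpos : 0 < ε := div_pos (by linarith) hqpos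
        have hu : ‖p + ε • qb‖ ≤ R := by
          calc ‖p + ε • qb‖ ≤ ‖p‖ + ‖ε • qb‖ := norm_add_le _ _
            _ = ‖p‖ + ε * ‖qb‖ := by rw [norm_smul, Real.norm_eq_abs, abs_of_pos hεpos]
            _ = R := by rw [hε]; field_simp; ring
        have h1 := hkey2 _ hu
        rw [hzbp, show p + ε • qb - p = ε • qb by abel, real_inner_smul_right,
          real_inner_self_eq_norm_sq] at h1
        nlinarith [mul_pos hεpos (pow_pos hqpos 2)]
      have hwb0 : l.2 = 0 := by
        have he : qb = -l.2 := by rw [hqbdef, hzbp]; abel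
        rw [hqb0] at he
        exact (neg_eq_zero.1 he.symm)
      rw [← hwb0, ← hzbp]
      exact hwmem
    · -- easy direction
      intro h0p
      refine le_antisymm ?_ (h0 p)
      rw [← EReal.coe_zero]
      apply gap_le
      intro zz hz ww hww
      have hm := hT.1 hww h0p
      rw [sub_zero] at hm
      have he : ⟪ww, p - zz⟫ = -⟪zz - p, ww⟫ := by
        rw [show p - zz = -(zz - p) from by abel, inner_neg_right]
        congr 1
        exact real_inner_comm _ _
      linarith
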